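/- Let k be a field of characteristic 0 and a, b ∈ k with ab ≠ 1. Then there is a k-algebra isomorphism k⟨x,y⟩/(xy² + yxy + y²x + ax³, yx² + xyx + x²y + by³) ≅ k⟨x,y,X,Y⟩/(3x³ − 3X, xy² + yxy + y²x + aX, yx² + xyx + x²y + bY, 3y³ − 3Y, Xx − xX, Xy − yX, Yx − xY, Yy − yY, XY − YX) sending (the images of) x to x and y to y. (The right-hand algebra is the generalized Clifford algebra A(M₁, M₂) with M₁ = ((3, −a),(0, 0)) and M₂ = ((0, 0),(−b, 3)).) -/

import Mathlib

/-- `x`, the first generator of the free algebra `k⟨x,y⟩`. -/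
noncomputable def Xg (k : Type*) [CommRing k] : FreeAlgebra k (Fin 2) :=
  FreeAlgebra.ι k 0

/-- `y`, the second generator of the free algebra `k⟨x,y⟩`. -/
noncomputable def Yg (k : Type*) [CommRing k] : FreeAlgebra k (Fin 2) :=
  FreeAlgebra.ι k 1

/-- The relation identifying `r₁ = xy² + yxy + y²x + ax³` and
`r₂ = yx² + xyx + x²y + by³` with `0`; `RingQuot` of this relation is
`k⟨x,y⟩/(r₁, r₂)`. -/
noncomputable def relLHS (k : Type*) [CommRing k] (a b : k) :
    FreeAlgebra k (Fin 2) → FreeAlgebra k (Fin 2) → Prop := fun p q =>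
  (p = Xg k * Yg k * Yg k + Yg k * Xg k * Yg k + Yg k * Yg k * Xg k +
        a • (Xg k * Xg k * Xg k) ∨
   p = Yg k * Xg k * Xg k + Xg k * Yg k * Xg k + Xg k * Xg k * Yg k +
        b • (Yg k * Yg k * Yg k)) ∧ q = 0

/-- The generators `x, y, X, Y` of the free algebra `k⟨x,y,X,Y⟩`. -/
noncomputable def G (k : Type*) [CommRing k] (i : Fin 4) : FreeAlgebra k (Fin 4) :=
  FreeAlgebra.ι k i

/-- The relation identifying the nine defining relations of the generalized Clifford
algebra `A(M₁, M₂)` (with `M₁ = ((3, −a),(0,0))`, `M₂ = ((0,0),(−b,3))`) with `0`: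
`3x³ − 3X`, `xy² + yxy + y²x + aX`, `yx² + xyx + x²y + bY`, `3y³ − 3Y`, and the
relations making `X` and `Y` central (w.r.t. the generators). -/
noncomputable def relRHS (k : Type*) [CommRing k] (a b : k) :
    FreeAlgebra k (Fin 4) → FreeAlgebra k (Fin 4) → Prop := fun p q =>
  p ∈ ({(3 : k) • (G k 0 * G k 0 * G k 0) - (3 : k) • G k 2,
        G k 0 * G k 1 * G k 1 + G k 1 * G k 0 * G k 1 + G k 1 * G k 1 * G k 0 +
          a • G k 2,
        G k 1 * G k 0 * G k 0 + G k 0 * G k 1 * G k 0 + G k 0 * G k 0 * G k 1 +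
          b • G k 3,
        (3 : k) • (G k 1 * G k 1 * G k 1) - (3 : k) • G k 3,
        G k 2 * G k 0 - G k 0 * G k 2,
        G k 2 * G k 1 - G k 1 * G k 2,
        G k 3 * G k 0 - G k 0 * G k 3,
        G k 3 * G k 1 - G k 1 * G k 3,
        G k 2 * G k 3 - G k 3 * G k 2} : Set (FreeAlgebra k (Fin 4))) ∧ q = 0

lemma mul_cube_comm' {A : Type*} [Ring A] {p q : A} (h : p * q = q * p) :
    p * (q * q * q) = q * q * q * p := by
  calc p * (q * q * q) = (p * q) * (q * q) := by noncomm_ring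
    _ = (q * p) * (q * q) := by rw [h]
    _ = q * ((p * q) * q) := by noncomm_ring
    _ = q * ((q * p) * q) := by rw [h]
    _ = (q * q) * (p * q) := by noncomm_ring
    _ = (q * q) * (q * p) := by rw [h]
    _ = q * q * q * p := by noncomm_ring

/-- if `ab ≠ 1`, there is a `k`-algebra isomorphism
`k⟨x,y⟩/(xy² + yxy + y²x + ax³, yx² + xyx + x²y + by³) ≅ A(M₁, M₂)`
sending the images of `x` and `y` to the images of `x` and `y`. -/
theorem statement14 (k : Type*) [Field k] [CharZero k] (a b : k) (hab : a * b ≠ 1) :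
    ∃ e : RingQuot (relLHS k a b) ≃ₐ[k] RingQuot (relRHS k a b),
      e (RingQuot.mkAlgHom k (relLHS k a b) (Xg k)) =
        RingQuot.mkAlgHom k (relRHS k a b) (G k 0) ∧
      e (RingQuot.mkAlgHom k (relLHS k a b) (Yg k)) =
        RingQuot.mkAlgHom k (relRHS k a b) (G k 1) := by
  classical
  set πL := RingQuot.mkAlgHom k (relLHS k a b) with hπLdef
  set πR := RingQuot.mkAlgHom k (relRHS k a b) with hπRdef
  set mx := πL (Xg k) with hmxdef
  set my := πL (Yg k) with hmydef
  -- facts in the RHS quotient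
  have keyR : ∀ p : FreeAlgebra k (Fin 4), p ∈ ({(3 : k) • (G k 0 * G k 0 * G k 0) - (3 : k) • G k 2,
        G k 0 * G k 1 * G k 1 + G k 1 * G k 0 * G k 1 + G k 1 * G k 1 * G k 0 +
          a • G k 2,
        G k 1 * G k 0 * G k 0 + G k 0 * G k 1 * G k 0 + G k 0 * G k 0 * G k 1 +
          b • G k 3,
        (3 : k) • (G k 1 * G k 1 * G k 1) - (3 : k) • G k 3,
        G k 2 * G k 0 - G k 0 * G k 2,
        G k 2 * G k 1 - G k 1 * G k 2,
        G k 3 * G k 0 - G k 0 * G k 3,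
        G k 3 * G k 1 - G k 1 * G k 3,
        G k 2 * G k 3 - G k 3 * G k 2} : Set (FreeAlgebra k (Fin 4))) → πR p = 0 := by
    intro p hp
    exact (RingQuot.mkAlgHom_rel k ⟨hp, rfl⟩).trans (map_zero _)
  have h3k : (3 : k) ≠ 0 := by norm_num
  have hR1 := keyR _ (Set.mem_insert _ _)
  simp only [map_sub, map_smul, map_mul] at hR1
  have hX : πR (G k 2) = πR (G k 0) * πR (G k 0) * πR (G k 0) := by
    have h1' : (3 : k) • (πR (G k 0) * πR (G k 0) * πR (G k 0) - πR (G k 2)) = 0 := by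
      rw [smul_sub]; exact hR1
    rcases smul_eq_zero.mp h1' with h | h
    · exact absurd h h3k
    · exact (sub_eq_zero.mp h).symm
  have hR4 := keyR _ (Set.mem_insert_of_mem _ (Set.mem_insert_of_mem _
    (Set.mem_insert_of_mem _ (Set.mem_insert _ _))))
  simp only [map_sub, map_smul, map_mul] at hR4
  have hY : πR (G k 3) = πR (G k 1) * πR (G k 1) * πR (G k 1) := by
    have h1' : (3 : k) • (πR (G k 1) * πR (G k 1) * πR (G k 1) - πR (G k 3)) = 0 := by
      rw [smul_sub]; exact hR4
    rcases smul_eq_zero.mp h1' with h | h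
    · exact absurd h h3k
    · exact (sub_eq_zero.mp h).symm
  have hX' := hX
  rw [hπRdef] at hX'
  simp only [G] at hX'
  have hY' := hY
  rw [hπRdef] at hY'
  simp only [G] at hY'
  have hR2 := keyR _ (Set.mem_insert_of_mem _ (Set.mem_insert _ _))
  simp only [map_add, map_smul, map_mul] at hR2
  rw [hX] at hR2
  have hR3 := keyR _ (Set.mem_insert_of_mem _ (Set.mem_insert_of_mem _ (Set.mem_insert _ _)))
  simp only [map_add, map_smul, map_mul] at hR3
  rw [hY] at hR3
  -- the forward map
  have hφw : ∀ ⦃p q : FreeAlgebra k (Fin 2)⦄, relLHS k a b p q →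
      (FreeAlgebra.lift k ![πR (G k 0), πR (G k 1)]) p =
      (FreeAlgebra.lift k ![πR (G k 0), πR (G k 1)]) q := by
    rintro p q ⟨hp | hp, rfl⟩ <;> subst hp <;>
      simp only [map_add, map_mul, map_smul, map_zero, Xg, Yg, FreeAlgebra.lift_ι_apply,
        Matrix.cons_val_zero, Matrix.cons_val_one, Matrix.head_cons]
    · exact hR2
    · exact hR3
  set φ := RingQuot.liftAlgHom k ⟨FreeAlgebra.lift k ![πR (G k 0), πR (G k 1)], hφw⟩ with hφdef
  -- facts in the LHS quotient
  have hA : mx * my * my + my * mx * my + my * my * mx + a • (mx * mx * mx) = 0 := by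
    have := (RingQuot.mkAlgHom_rel k (s := relLHS k a b) ⟨Or.inl rfl, rfl⟩).trans
      (map_zero (RingQuot.mkAlgHom k (relLHS k a b)))
    simpa only [map_add, map_mul, map_smul, ← hπLdef, ← hmxdef, ← hmydef] using this
  have hB : my * mx * mx + mx * my * mx + mx * mx * my + b • (my * my * my) = 0 := by
    have := (RingQuot.mkAlgHom_rel k (s := relLHS k a b) ⟨Or.inr rfl, rfl⟩).trans
      (map_zero (RingQuot.mkAlgHom k (relLHS k a b)))
    simpa only [map_add, map_mul, map_smul, ← hπLdef, ← hmxdef, ← hmydef] using this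
  have hSB : my * mx * mx + mx * my * mx + mx * mx * my = -(b • (my * my * my)) :=
    eq_neg_of_add_eq_zero_left hB
  have hSA : mx * my * my + my * mx * my + my * my * mx = -(a • (mx * mx * mx)) :=
    eq_neg_of_add_eq_zero_left hA
  have e1 : mx * mx * mx * my - my * (mx * mx * mx) =
      b • (my * my * my * mx - mx * (my * my * my)) := by
    have h1 : mx * mx * mx * my - my * (mx * mx * mx) =
        mx * (my * mx * mx + mx * my * mx + mx * mx * my) -
        (my * mx * mx + mx * my * mx + mx * mx * my) * mx := by noncomm_ring
    rw [h1, hSB, mul_neg mx (b • (my * my * my)), neg_mul (b • (my * my * my)) mx,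
      mul_smul_comm b mx (my * my * my), smul_mul_assoc b (my * my * my) mx,
      smul_sub b (my * my * my * mx) (mx * (my * my * my))]
    abel
  have e2 : my * my * my * mx - mx * (my * my * my) =
      a • (mx * mx * mx * my - my * (mx * mx * mx)) := by
    have h1 : my * my * my * mx - mx * (my * my * my) =
        my * (mx * my * my + my * mx * my + my * my * mx) -
        (mx * my * my + my * mx * my + my * my * mx) * my := by noncomm_ring
    rw [h1, hSA, mul_neg my (a • (mx * mx * mx)), neg_mul (a • (mx * mx * mx)) my,
      mul_smul_comm a my (mx * mx * mx), smul_mul_assoc a (mx * mx * mx) my,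
      smul_sub a (mx * mx * mx * my) (my * (mx * mx * mx))]
    abel
  have hu : mx * mx * mx * my - my * (mx * mx * mx) = 0 := by
    have h5 : (1 - a * b) • (mx * mx * mx * my - my * (mx * mx * mx)) = 0 := by
      rw [sub_smul (1 : k) (a * b) (mx * mx * mx * my - my * (mx * mx * mx)),
        one_smul k (mx * mx * mx * my - my * (mx * mx * mx))]
      nth_rewrite 1 [e1]
      rw [e2, smul_smul b a (mx * mx * mx * my - my * (mx * mx * mx)), mul_comm b a, sub_self]
    rcases smul_eq_zero.mp h5 with h | h
    · exact absurd (sub_eq_zero.mp h).symm hab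
    · exact h
  have hv : my * my * my * mx - mx * (my * my * my) = 0 := by
    rw [e2, hu, smul_zero]
  -- the backward map
  have hψw : ∀ ⦃p q : FreeAlgebra k (Fin 4)⦄, relRHS k a b p q →
      (FreeAlgebra.lift k ![mx, my, mx * mx * mx, my * my * my]) p =
      (FreeAlgebra.lift k ![mx, my, mx * mx * mx, my * my * my]) q := by
    rintro p q ⟨hp, rfl⟩
    simp only [Set.mem_insert_iff, Set.mem_singleton_iff] at hp
    rcases hp with rfl | rfl | rfl | rfl | rfl | rfl | rfl | rfl | rfl <;>
      simp only [map_add, map_sub, map_mul, map_smul, map_zero, G, FreeAlgebra.lift_ι_apply,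
        Matrix.cons_val_zero, Matrix.cons_val_one, Matrix.head_cons, Matrix.cons_val_two,
        Matrix.tail_cons, Matrix.cons_val_three]
    · rw [sub_self]
    · exact hA
    · exact hB
    · rw [sub_self]
    · noncomm_ring
    · exact hu
    · exact hv
    · noncomm_ring
    · rw [sub_eq_zero]
      exact mul_cube_comm' (sub_eq_zero.mp hu)
  set ψ := RingQuot.liftAlgHom k ⟨FreeAlgebra.lift k ![mx, my, mx * mx * mx, my * my * my], hψw⟩
    with hψdef
  have hc1 : φ.comp ψ = AlgHom.id k (RingQuot (relRHS k a b)) := by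
    apply RingQuot.ringQuot_ext'
    apply FreeAlgebra.hom_ext
    funext i
    fin_cases i <;>
      simp [Function.comp_apply, AlgHom.coe_comp, AlgHom.coe_id, id_eq, hφdef, hψdef,
        hπRdef, RingQuot.liftAlgHom_mkAlgHom_apply, hmxdef, hmydef, hπLdef,
        map_mul, FreeAlgebra.lift_ι_apply, Matrix.cons_val_zero, Matrix.cons_val_one,
        Matrix.head_cons, Matrix.cons_val_two, Matrix.tail_cons, Matrix.cons_val_three,
        Xg, Yg, G, ← hX', ← hY']
  have hc2 : ψ.comp φ = AlgHom.id k (RingQuot (relLHS k a b)) := by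
    apply RingQuot.ringQuot_ext'
    apply FreeAlgebra.hom_ext
    funext i
    fin_cases i <;>
      simp [Function.comp_apply, AlgHom.coe_comp, AlgHom.coe_id, id_eq, hφdef, hψdef,
        hπRdef, hπLdef, RingQuot.liftAlgHom_mkAlgHom_apply, hmxdef, hmydef,
        map_mul, FreeAlgebra.lift_ι_apply, Matrix.cons_val_zero, Matrix.cons_val_one,
        Matrix.head_cons, Xg, Yg, G]
  refine ⟨AlgEquiv.ofAlgHom φ ψ hc1 hc2, ?_, ?_⟩
  · show φ mx = πR (G k 0)
    simp only [hφdef, hmxdef, hπLdef, RingQuot.liftAlgHom_mkAlgHom_apply, Xg,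
      FreeAlgebra.lift_ι_apply, Matrix.cons_val_zero]
  · show φ my = πR (G k 1)
    simp only [hφdef, hmydef, hπLdef, RingQuot.liftAlgHom_mkAlgHom_apply, Yg,
      FreeAlgebra.lift_ι_apply, Matrix.cons_val_one, Matrix.head_cons, Matrix.cons_val_zero]
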